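/- Let u, v, u', v', x₁, x₂, x₃ be words over an alphabet Γ such that x₂·x₃ = x₃·x₂ and x₂ ≠ ε. If u·x₁·v = u'·x₁·v' and u·x₁·x₂·v = u'·x₁·x₂·v', then u·x₁·x₂·x₃·v = u'·x₁·x₂·x₃·v'. -/

import Mathlib

private lemma comm_pow {Γ : Type*} {w x : List Γ} (h : w ++ x = x ++ w) (n : ℕ) :
    w ++ (List.replicate n x).flatten = (List.replicate n x).flatten ++ w := by
  induction n with
  | zero => simp
  | succ n ih =>
    simp only [List.replicate_succ, List.flatten_cons]
    calc w ++ (x ++ (List.replicate n x).flatten)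
        = (w ++ x) ++ (List.replicate n x).flatten := by rw [List.append_assoc]
      _ = x ++ (w ++ (List.replicate n x).flatten) := by rw [h, List.append_assoc]
      _ = x ++ ((List.replicate n x).flatten ++ w) := by rw [ih]
      _ = x ++ (List.replicate n x).flatten ++ w := by rw [List.append_assoc]

private lemma comm_prefix {Γ : Type*} {w p : List Γ} (h : w ++ p = p ++ w)
    (hlen : w.length ≤ p.length) : w = p.take w.length := by
  have := congrArg (List.take w.length) h
  rwa [List.take_left, List.take_append_of_le_length hlen] at this

private lemma comm_of_comm {Γ : Type*} {a b x : List Γ} (ha : a ++ x = x ++ a)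
    (hb : b ++ x = x ++ b) (hx : x ≠ []) : a ++ b = b ++ a := by
  set n := a.length + b.length with hn
  set p := (List.replicate n x).flatten with hp
  have hplen : n ≤ p.length := by
    have hxpos : 1 ≤ x.length := List.length_pos_iff.mpr hx
    simp only [hp, List.length_flatten, List.map_replicate, List.sum_replicate, smul_eq_mul]
    calc n = n * 1 := (mul_one n).symm
      _ ≤ n * x.length := Nat.mul_le_mul_left n hxpos
  have hab : (a ++ b) ++ p = p ++ (a ++ b) := by
    have := comm_pow ha n; have h2 := comm_pow hb n
    calc (a ++ b) ++ p = a ++ (b ++ p) := List.append_assoc ..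
      _ = a ++ (p ++ b) := by rw [h2]
      _ = (a ++ p) ++ b := (List.append_assoc ..).symm
      _ = (p ++ a) ++ b := by rw [this]
      _ = p ++ (a ++ b) := List.append_assoc ..
  have hba : (b ++ a) ++ p = p ++ (b ++ a) := by
    have := comm_pow ha n; have h2 := comm_pow hb n
    calc (b ++ a) ++ p = b ++ (a ++ p) := List.append_assoc ..
      _ = b ++ (p ++ a) := by rw [this]
      _ = (b ++ p) ++ a := (List.append_assoc ..).symm
      _ = (p ++ b) ++ a := by rw [h2]
      _ = p ++ (b ++ a) := List.append_assoc ..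
  have l1 : (a ++ b).length ≤ p.length := by
    simpa [hn] using hplen
  have l2 : (b ++ a).length ≤ p.length := by
    simp only [List.length_append] at l1 ⊢; omega
  have e1 := comm_prefix hab l1
  have e2 := comm_prefix hba l2
  rw [e1, e2]
  congr 1
  simp [List.length_append, Nat.add_comm]

private lemma main_aux {Γ : Type*} {a b v v' x₂ x₃ : List Γ}
    (hcomm : x₂ ++ x₃ = x₃ ++ x₂) (hx₂ : x₂ ≠ [])
    (h₁ : a ++ v = b ++ v') (h₂ : a ++ x₂ ++ v = b ++ x₂ ++ v')
    (hle : a.length ≤ b.length) :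
    a ++ (x₂ ++ x₃) ++ v = b ++ (x₂ ++ x₃) ++ v' := by
  have hpre : a <+: b := by
    have := congrArg (List.take a.length) h₁
    rw [List.take_left, List.take_append_of_le_length hle] at this
    exact this ▸ ⟨b.drop a.length, by simp⟩
  obtain ⟨t, rfl⟩ := hpre
  have hv : v = t ++ v' := by
    have : a ++ v = a ++ (t ++ v') := by rw [h₁, List.append_assoc]
    exact List.append_cancel_left this
  subst hv
  have hcomm_t : x₂ ++ t = t ++ x₂ := by
    have : (a ++ (x₂ ++ t)) ++ v' = (a ++ (t ++ x₂)) ++ v' := by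
      calc (a ++ (x₂ ++ t)) ++ v' = a ++ x₂ ++ (t ++ v') := by simp [List.append_assoc]
        _ = a ++ t ++ x₂ ++ v' := by rw [h₂]
        _ = (a ++ (t ++ x₂)) ++ v' := by simp [List.append_assoc]
    exact List.append_cancel_left (List.append_cancel_right this)
  have ht3 : t ++ x₃ = x₃ ++ t := comm_of_comm hcomm_t.symm hcomm.symm hx₂
  have key : (x₂ ++ x₃) ++ t = t ++ (x₂ ++ x₃) := by
    calc (x₂ ++ x₃) ++ t = x₂ ++ (x₃ ++ t) := List.append_assoc ..
      _ = x₂ ++ (t ++ x₃) := by rw [ht3]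
      _ = (x₂ ++ t) ++ x₃ := (List.append_assoc ..).symm
      _ = (t ++ x₂) ++ x₃ := by rw [hcomm_t]
      _ = t ++ (x₂ ++ x₃) := List.append_assoc ..
  calc a ++ (x₂ ++ x₃) ++ (t ++ v') = a ++ ((x₂ ++ x₃) ++ t) ++ v' := by
        simp [List.append_assoc]
    _ = a ++ (t ++ (x₂ ++ x₃)) ++ v' := by rw [key]
    _ = a ++ t ++ (x₂ ++ x₃) ++ v' := by simp [List.append_assoc]

/-- If `x₂·x₃ = x₃·x₂`, `x₂ ≠ ε`, `u·x₁·v = u'·x₁·v'` and `u·x₁·x₂·v = u'·x₁·x₂·v'`,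
then `u·x₁·x₂·x₃·v = u'·x₁·x₂·x₃·v'`. -/
theorem third_eq_of_first_two {Γ : Type*} (u v u' v' x₁ x₂ x₃ : List Γ)
    (hcomm : x₂ ++ x₃ = x₃ ++ x₂) (hx₂ : x₂ ≠ [])
    (h₁ : u ++ x₁ ++ v = u' ++ x₁ ++ v')
    (h₂ : u ++ x₁ ++ x₂ ++ v = u' ++ x₁ ++ x₂ ++ v') :
    u ++ x₁ ++ x₂ ++ x₃ ++ v = u' ++ x₁ ++ x₂ ++ x₃ ++ v' := by
  have h₂' : (u ++ x₁) ++ x₂ ++ v = (u' ++ x₁) ++ x₂ ++ v' := h₂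
  rcases le_total (u ++ x₁).length (u' ++ x₁).length with hle | hle
  · have := main_aux hcomm hx₂ h₁ h₂' hle
    simpa [List.append_assoc] using this
  · have := main_aux hcomm hx₂ h₁.symm h₂'.symm hle
    simpa [List.append_assoc] using this.symm
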